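/- Cross-term lower bound (inequality (eq:distcontrac_opt_funda_term) in the proof of Lemma 3). Let Z⋆₁, Z⋆₂, Δ₁, Δ₂ ∈ ℂ^{n×r} and suppose (Z⋆₁)ᴴ·Δ₁ = Δ₂ᵀ·conj(Z⋆₂). Then ‖Δ₁·Z⋆₂ᵀ + Z⋆₁·Δ₂ᵀ‖_F² ≥ σ_min(Z⋆₂)²·‖Δ₁‖_F² + σ_min(Z⋆₁)²·‖Δ₂‖_F². (In particular, under this alignment condition the cross inner product Re⟨Δ₁Z⋆₂ᵀ, Z⋆₁Δ₂ᵀ⟩ is nonnegative.) -/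

import Mathlib

open Matrix
open scoped BigOperators

noncomputable section

/-- Frobenius norm of a complex matrix. -/
def frobNorm {m n : ℕ} (A : Matrix (Fin m) (Fin n) ℂ) : ℝ :=
  Real.sqrt (∑ i, ∑ j, ‖A i j‖ ^ 2)

/-- Euclidean (ℓ₂) norm of a complex vector. -/
def vecNorm {n : ℕ} (v : Fin n → ℂ) : ℝ :=
  Real.sqrt (∑ i, ‖v i‖ ^ 2)

/-- Smallest singular value of a complex matrix. -/
def sigmaMin {m n : ℕ} (A : Matrix (Fin m) (Fin n) ℂ) : ℝ :=
  sInf {t : ℝ | ∃ v : Fin n → ℂ, vecNorm v = 1 ∧ t = vecNorm (A.mulVec v)}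

/-- Entrywise complex conjugate of a matrix. -/
def conjM {m n : ℕ} (A : Matrix (Fin m) (Fin n) ℂ) : Matrix (Fin m) (Fin n) ℂ :=
  A.map (starRingEnd ℂ)

lemma vecNorm_nonneg {n : ℕ} (v : Fin n → ℂ) : 0 ≤ vecNorm v := Real.sqrt_nonneg _

lemma vecNorm_sq {n : ℕ} (v : Fin n → ℂ) : vecNorm v ^ 2 = ∑ i, ‖v i‖ ^ 2 :=
  Real.sq_sqrt (Finset.sum_nonneg fun _ _ => sq_nonneg _)

lemma frobNorm_sq {m n : ℕ} (A : Matrix (Fin m) (Fin n) ℂ) :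
    frobNorm A ^ 2 = ∑ i, ∑ j, ‖A i j‖ ^ 2 :=
  Real.sq_sqrt (Finset.sum_nonneg fun _ _ => Finset.sum_nonneg fun _ _ => sq_nonneg _)

lemma sigmaMin_nonneg {m n : ℕ} (A : Matrix (Fin m) (Fin n) ℂ) : 0 ≤ sigmaMin A := by
  apply Real.sInf_nonneg
  rintro t ⟨v, hv, rfl⟩
  exact vecNorm_nonneg _

lemma vecNorm_smul {n : ℕ} (c : ℂ) (v : Fin n → ℂ) : vecNorm (c • v) = ‖c‖ * vecNorm v := by
  unfold vecNorm
  simp [Pi.smul_apply, norm_smul, mul_pow, ← Finset.mul_sum,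
    Real.sqrt_mul (sq_nonneg _), Real.sqrt_sq (norm_nonneg c)]

lemma sigmaMin_le_mulVec {m n : ℕ} (Z : Matrix (Fin m) (Fin n) ℂ) (v : Fin n → ℂ) :
    sigmaMin Z * vecNorm v ≤ vecNorm (Z.mulVec v) := by
  rcases eq_or_lt_of_le (vecNorm_nonneg v) with h | h
  · rw [← h, mul_zero]; exact vecNorm_nonneg _
  · set c : ℂ := ((vecNorm v : ℝ) : ℂ)⁻¹ with hc
    have hcn : ‖c‖ = (vecNorm v)⁻¹ := by
      rw [hc, norm_inv, Complex.norm_real, Real.norm_of_nonneg (vecNorm_nonneg v)]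
    have hu : vecNorm (c • v) = 1 := by
      rw [vecNorm_smul, hcn, inv_mul_cancel₀ (ne_of_gt h)]
    have hbdd : BddBelow {t : ℝ | ∃ w : Fin n → ℂ, vecNorm w = 1 ∧ t = vecNorm (Z.mulVec w)} := by
      refine ⟨0, ?_⟩
      rintro t ⟨w, hw, rfl⟩
      exact vecNorm_nonneg _
    have hle : sigmaMin Z ≤ vecNorm (Z.mulVec (c • v)) :=
      csInf_le hbdd ⟨c • v, hu, rfl⟩
    rw [Matrix.mulVec_smul, vecNorm_smul, hcn] at hle
    calc sigmaMin Z * vecNorm v ≤ ((vecNorm v)⁻¹ * vecNorm (Z.mulVec v)) * vecNorm v :=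
          mul_le_mul_of_nonneg_right hle (vecNorm_nonneg v)
      _ = vecNorm (Z.mulVec v) := by field_simp

lemma sum_mulVec_sq {m n : ℕ} (Z : Matrix (Fin m) (Fin n) ℂ) (v : Fin n → ℂ) :
    sigmaMin Z ^ 2 * ∑ j, ‖v j‖ ^ 2 ≤ ∑ k, ‖Z.mulVec v k‖ ^ 2 := by
  have h1 := sigmaMin_le_mulVec Z v
  have h2 : (sigmaMin Z * vecNorm v) ^ 2 ≤ vecNorm (Z.mulVec v) ^ 2 := by
    apply pow_le_pow_left₀ (mul_nonneg (sigmaMin_nonneg Z) (vecNorm_nonneg v)) h1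
  rw [mul_pow, vecNorm_sq, vecNorm_sq] at h2
  exact h2

lemma norm_add_sq_c (a b : ℂ) : ‖a + b‖ ^ 2 = ‖a‖ ^ 2 + ‖b‖ ^ 2 + 2 * ((starRingEnd ℂ) a * b).re := by
  simp [Complex.sq_norm, Complex.normSq_apply, Complex.add_re,
    Complex.add_im, Complex.mul_re, Complex.conj_re, Complex.conj_im]
  ring

lemma conjM_conjTranspose {m n : ℕ} (A : Matrix (Fin m) (Fin n) ℂ) : (conjM A)ᴴ = Aᵀ := by
  ext i j; simp [conjM, conjTranspose_apply]

lemma transpose_conjTranspose' {m n : ℕ} (A : Matrix (Fin m) (Fin n) ℂ) : (Aᵀ)ᴴ = conjM A := by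
  ext i j; simp [conjM, conjTranspose_apply]

lemma re_sum {α : Type*} (s : Finset α) (f : α → ℂ) :
    (∑ i ∈ s, f i).re = ∑ i ∈ s, (f i).re :=
  map_sum Complex.reAddGroupHom f s

/-- Cross-term lower bound: if `(Z⋆₁)ᴴΔ₁ = Δ₂ᵀ·conj(Z⋆₂)`, then
`‖Δ₁Z⋆₂ᵀ + Z⋆₁Δ₂ᵀ‖_F² ≥ σ_min(Z⋆₂)²‖Δ₁‖_F² + σ_min(Z⋆₁)²‖Δ₂‖_F²`; in particular
the cross inner product `Re⟨Δ₁Z⋆₂ᵀ, Z⋆₁Δ₂ᵀ⟩` is nonnegative. -/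
theorem cross_term_lower_bound (n r : ℕ)
    (Zs₁ Zs₂ Δ₁ Δ₂ : Matrix (Fin n) (Fin r) ℂ)
    (halign : Zs₁ᴴ * Δ₁ = Δ₂ᵀ * conjM Zs₂) :
    (frobNorm (Δ₁ * Zs₂ᵀ + Zs₁ * Δ₂ᵀ) ^ 2
        ≥ sigmaMin Zs₂ ^ 2 * frobNorm Δ₁ ^ 2 + sigmaMin Zs₁ ^ 2 * frobNorm Δ₂ ^ 2)
    ∧ 0 ≤ (Matrix.trace ((Δ₁ * Zs₂ᵀ)ᴴ * (Zs₁ * Δ₂ᵀ))).re := by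
  set A := Δ₁ * Zs₂ᵀ with hA
  set B := Zs₁ * Δ₂ᵀ with hB
  set C := Zs₂ᵀ * conjM Δ₂ with hCdef
  -- the alignment gives  Δ₁ᴴ * Zs₁ = C
  have hC : Δ₁ᴴ * Zs₁ = C := by
    have h := congrArg conjTranspose halign
    rw [conjTranspose_mul, conjTranspose_mul, conjTranspose_conjTranspose,
      conjM_conjTranspose, transpose_conjTranspose'] at h
    exact h
  have hCH : Δ₂ᵀ * conjM Zs₂ = Cᴴ := by
    rw [hCdef, conjTranspose_mul, conjM_conjTranspose, transpose_conjTranspose']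
  -- the cross term equals trace (Cᴴ * C)
  have htr_eq : Matrix.trace (Aᴴ * B) = Matrix.trace (Cᴴ * C) := by
    have h1 : Aᴴ * B = conjM Zs₂ * (C * Δ₂ᵀ) := by
      rw [hA, hB, conjTranspose_mul, transpose_conjTranspose']
      rw [show conjM Zs₂ * Δ₁ᴴ * (Zs₁ * Δ₂ᵀ) = conjM Zs₂ * ((Δ₁ᴴ * Zs₁) * Δ₂ᵀ) by
        simp [Matrix.mul_assoc]]
      rw [hC]
    rw [h1, Matrix.trace_mul_comm, Matrix.mul_assoc, hCH, Matrix.trace_mul_comm]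
  -- nonnegativity of the cross term
  have hcross : 0 ≤ (Matrix.trace (Aᴴ * B)).re := by
    rw [htr_eq]
    unfold Matrix.trace Matrix.diag
    rw [re_sum]
    apply Finset.sum_nonneg
    intro k _
    rw [Matrix.mul_apply, re_sum]
    apply Finset.sum_nonneg
    intro i _
    rw [conjTranspose_apply]
    have : (star (C i k) * C i k).re = Complex.normSq (C i k) := by
      rw [Complex.star_def, Complex.normSq_apply]
      simp [Complex.mul_re, Complex.conj_re, Complex.conj_im]
    rw [this]
    exact Complex.normSq_nonneg _
  -- trace re as a double sum in Frobenius order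
  have htr : (Matrix.trace (Aᴴ * B)).re
      = ∑ i, ∑ k, ((starRingEnd ℂ) (A i k) * B i k).re := by
    unfold Matrix.trace Matrix.diag
    rw [re_sum]
    rw [Finset.sum_comm]
    apply Finset.sum_congr rfl
    intro i _
    rw [Matrix.mul_apply, re_sum]
    apply Finset.sum_congr rfl
    intro k _
    rw [conjTranspose_apply, Complex.star_def]
  -- expansion of the Frobenius norm of the sum
  have hexp : frobNorm (A + B) ^ 2
      = frobNorm A ^ 2 + frobNorm B ^ 2 + 2 * (Matrix.trace (Aᴴ * B)).re := by
    rw [frobNorm_sq, frobNorm_sq, frobNorm_sq, htr]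
    calc ∑ i, ∑ j, ‖(A + B) i j‖ ^ 2
        = ∑ i, ∑ j, (‖A i j‖ ^ 2 + ‖B i j‖ ^ 2
            + 2 * ((starRingEnd ℂ) (A i j) * B i j).re) := by
          refine Finset.sum_congr rfl fun i _ => Finset.sum_congr rfl fun j _ => ?_
          rw [Matrix.add_apply]; exact norm_add_sq_c _ _
      _ = _ := by simp only [Finset.sum_add_distrib, Finset.mul_sum]
  -- lower bound for ‖A‖²
  have hAlow : sigmaMin Zs₂ ^ 2 * frobNorm Δ₁ ^ 2 ≤ frobNorm A ^ 2 := by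
    rw [frobNorm_sq, frobNorm_sq, Finset.mul_sum]
    apply Finset.sum_le_sum
    intro i _
    have heq : ∀ k, A i k = Zs₂.mulVec (Δ₁ i) k := by
      intro k
      rw [hA, Matrix.mul_apply, Matrix.mulVec, dotProduct]
      exact Finset.sum_congr rfl fun j _ => by rw [transpose_apply, mul_comm]
    calc sigmaMin Zs₂ ^ 2 * ∑ j, ‖Δ₁ i j‖ ^ 2 ≤ ∑ k, ‖Zs₂.mulVec (Δ₁ i) k‖ ^ 2 :=
          sum_mulVec_sq Zs₂ (Δ₁ i)
      _ = ∑ k, ‖A i k‖ ^ 2 := by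
          exact Finset.sum_congr rfl fun k _ => by rw [heq k]
  -- lower bound for ‖B‖²
  have hBlow : sigmaMin Zs₁ ^ 2 * frobNorm Δ₂ ^ 2 ≤ frobNorm B ^ 2 := by
    rw [frobNorm_sq, frobNorm_sq, Finset.mul_sum, Finset.sum_comm (γ := Fin n)]
    apply Finset.sum_le_sum
    intro k _
    have heq : ∀ i, B i k = Zs₁.mulVec (Δ₂ k) i := by
      intro i
      rw [hB, Matrix.mul_apply, Matrix.mulVec, dotProduct]
      exact Finset.sum_congr rfl fun j _ => by rw [transpose_apply]
    calc sigmaMin Zs₁ ^ 2 * ∑ j, ‖Δ₂ k j‖ ^ 2 ≤ ∑ i, ‖Zs₁.mulVec (Δ₂ k) i‖ ^ 2 :=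
          sum_mulVec_sq Zs₁ (Δ₂ k)
      _ = ∑ i, ‖B i k‖ ^ 2 := by
          exact Finset.sum_congr rfl fun i _ => by rw [heq i]
  refine ⟨?_, hcross⟩
  rw [hexp]
  linarith
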